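/- arXiv:0808.3081 — 3 statements merged into one kernel-verified Lean document; each statement's English description precedes it below -/
import Mathlib

section
/- Let g ≥ 1 and let B be a complex g×g matrix which is symmetric and whose imaginary part is positive definite. Then for all p, q, z ∈ ℂ^g the theta series, i.e. the family indexed by m ∈ ℤ^g with terms exp(πi⟨B(m+p), m+p⟩ + 2πi⟨z+q, m+p⟩), is absolutely summable (so the theta function Θ[p,q](z|B) is well defined). -/
open scoped BigOperators
open Matrix Complex

/-- The term of the theta series with characteristic `[p,q]`, argument `z`
and period matrix `B`, indexed by `m ∈ ℤ^g`:
`exp(πi⟨B(m+p), m+p⟩ + 2πi⟨z+q, m+p⟩)`. -/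
noncomputable def thetaTerm (g : ℕ) (B : Matrix (Fin g) (Fin g) ℂ)
    (p q z : Fin g → ℂ) (m : Fin g → ℤ) : ℂ :=
  Complex.exp ((Real.pi : ℂ) * Complex.I *
      (B.mulVec ((fun j => (m j : ℂ)) + p) ⬝ᵥ ((fun j => (m j : ℂ)) + p)) +
    2 * (Real.pi : ℂ) * Complex.I * ((z + q) ⬝ᵥ ((fun j => (m j : ℂ)) + p)))

/-- The theta function `Θ[p,q](z|B)`. -/
noncomputable def Theta (g : ℕ) (B : Matrix (Fin g) (Fin g) ℂ)
    (p q z : Fin g → ℂ) : ℂ :=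
  ∑' m : Fin g → ℤ, thetaTerm g B p q z m

/-- The imaginary part of `B` is positive definite as a real quadratic form. -/
def ImPosDef (g : ℕ) (B : Matrix (Fin g) (Fin g) ℂ) : Prop :=
  ∀ v : Fin g → ℝ, v ≠ 0 →
    0 < (Matrix.of fun j k => (B j k).im).mulVec v ⬝ᵥ v

/- ### Auxiliary lemmas -/

lemma oneDim (t : ℝ) (ht : 0 < t) (w : ℝ) :
    Summable (fun n : ℤ => Real.exp (-(Real.pi * t) * (n : ℝ) ^ 2 + w * n)) := by
  have hτ : (0 : ℝ) < ((t : ℂ) * I).im := by simpa using ht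
  have h := (summable_jacobiTheta₂_term_iff (((-(w / (2 * Real.pi)) : ℝ) : ℂ) * I)
      ((t : ℂ) * I)).mpr hτ
  have h2 : Summable fun n : ℤ =>
      ‖jacobiTheta₂_term n (((-(w / (2 * Real.pi)) : ℝ) : ℂ) * I) ((t : ℂ) * I)‖ :=
    summable_norm_iff.mpr h
  refine h2.congr fun n => ?_
  rw [norm_jacobiTheta₂_term]
  congr 1
  have hπ : (Real.pi : ℝ) ≠ 0 := Real.pi_ne_zero
  simp only [Complex.mul_im, Complex.ofReal_re, Complex.I_im, Complex.ofReal_im, Complex.I_re,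
    mul_one, mul_zero, add_zero, zero_mul]
  field_simp
  ring

lemma oneDimAbs (t : ℝ) (ht : 0 < t) (W : ℝ) :
    Summable (fun n : ℤ => Real.exp (-(Real.pi * t) * (n : ℝ) ^ 2 + W * |(n : ℝ)|)) := by
  refine Summable.of_nonneg_of_le (fun n => (Real.exp_pos _).le) (fun n => ?_)
    ((oneDim t ht W).add (oneDim t ht (-W)))
  have h1 : W * |(n : ℝ)| ≤ |W * n| := by
    rw [abs_mul]
    exact mul_le_mul_of_nonneg_right (le_abs_self W) (abs_nonneg _)
  rcases abs_cases (W * (n : ℝ)) with ⟨h, _⟩ | ⟨h, _⟩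
  · calc Real.exp (-(Real.pi * t) * (n : ℝ) ^ 2 + W * |(n : ℝ)|)
        ≤ Real.exp (-(Real.pi * t) * (n : ℝ) ^ 2 + W * n) := by
          apply Real.exp_le_exp.mpr; nlinarith [h1]
      _ ≤ _ := le_add_of_nonneg_right (Real.exp_pos _).le
  · calc Real.exp (-(Real.pi * t) * (n : ℝ) ^ 2 + W * |(n : ℝ)|)
        ≤ Real.exp (-(Real.pi * t) * (n : ℝ) ^ 2 + (-W) * n) := by
          apply Real.exp_le_exp.mpr; nlinarith [h1]
      _ ≤ _ := le_add_of_nonneg_left (Real.exp_pos _).le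

lemma piProd (g : ℕ) (F : ℤ → ℝ) (h0 : ∀ n, 0 ≤ F n) (hF : Summable F) :
    Summable (fun m : Fin g → ℤ => ∏ j, F (m j)) := by
  induction g with
  | zero =>
    have : Finite (Fin 0 → ℤ) := by infer_instance
    exact Summable.of_finite
  | succ n ih =>
    rw [← (Fin.consEquiv fun _ : Fin (n + 1) => ℤ).summable_iff]
    have : ((fun m : Fin (n + 1) → ℤ => ∏ j, F (m j)) ∘ (Fin.consEquiv fun _ : Fin (n + 1) => ℤ))
        = fun x : ℤ × (Fin n → ℤ) => F x.1 * ∏ j, F (x.2 j) := by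
      funext x
      simp only [Function.comp_apply, Fin.consEquiv_apply]
      rw [Fin.prod_univ_succ]
      rfl
    rw [this]
    have := Summable.mul_of_nonneg (f := F) (g := fun m : Fin n → ℤ => ∏ j, F (m j))
      hF ih (fun k => h0 k) (fun m => Finset.prod_nonneg fun j _ => h0 _)
    exact this

lemma posdefBound (g : ℕ) (hg : 1 ≤ g) (A : Matrix (Fin g) (Fin g) ℝ)
    (h : ∀ v : Fin g → ℝ, v ≠ 0 → 0 < A.mulVec v ⬝ᵥ v) :
    ∃ c > 0, ∀ v : Fin g → ℝ, c * ∑ j, v j ^ 2 ≤ A.mulVec v ⬝ᵥ v := by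
  set f : EuclideanSpace ℝ (Fin g) → ℝ :=
    fun v => A.mulVec ((EuclideanSpace.equiv (Fin g) ℝ) v) ⬝ᵥ ((EuclideanSpace.equiv (Fin g) ℝ) v)
    with hf_def
  have hcont : Continuous fun v : Fin g → ℝ => A.mulVec v ⬝ᵥ v := by
    unfold Matrix.mulVec dotProduct
    continuity
  have hfc : Continuous f := hcont.comp (EuclideanSpace.equiv (Fin g) ℝ).continuous
  have hsph : IsCompact (Metric.sphere (0 : EuclideanSpace ℝ (Fin g)) 1) :=
    isCompact_sphere 0 1
  have hne : (Metric.sphere (0 : EuclideanSpace ℝ (Fin g)) 1).Nonempty := by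
    refine ⟨EuclideanSpace.single ⟨0, hg⟩ (1 : ℝ), ?_⟩
    simp [EuclideanSpace.norm_single]
  obtain ⟨v₀, hv₀, hmin⟩ := hsph.exists_isMinOn hne hfc.continuousOn
  have hv₀norm : ‖v₀‖ = 1 := mem_sphere_zero_iff_norm.mp hv₀
  have hv₀ne : (EuclideanSpace.equiv (Fin g) ℝ) v₀ ≠ 0 := by
    intro hzero
    have : v₀ = 0 := by
      apply (EuclideanSpace.equiv (Fin g) ℝ).injective
      simpa using hzero
    rw [this] at hv₀norm; simp at hv₀norm
  have hc : 0 < f v₀ := h _ hv₀ne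
  refine ⟨f v₀, hc, fun v => ?_⟩
  by_cases hv : v = 0
  · subst hv; simp [Matrix.mulVec_zero]
  · set u : EuclideanSpace ℝ (Fin g) := (EuclideanSpace.equiv (Fin g) ℝ).symm v with hu_def
    have hun : ‖u‖ ≠ 0 := by
      simp only [norm_ne_zero_iff]
      intro h0
      apply hv
      have := congrArg (EuclideanSpace.equiv (Fin g) ℝ) h0
      simpa [hu_def] using this
    have hr : 0 < ‖u‖ := lt_of_le_of_ne (norm_nonneg _) (Ne.symm hun)
    have hsphere : ‖u‖⁻¹ • u ∈ Metric.sphere (0 : EuclideanSpace ℝ (Fin g)) 1 := by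
      simp [norm_smul, abs_of_pos (inv_pos.mpr hr), inv_mul_cancel₀ hun]
    have hle := hmin hsphere
    have hhom : f (‖u‖⁻¹ • u) = ‖u‖⁻¹ * ‖u‖⁻¹ * (A.mulVec v ⬝ᵥ v) := by
      have h1 : (EuclideanSpace.equiv (Fin g) ℝ) (‖u‖⁻¹ • u) = ‖u‖⁻¹ • v := by
        ext j; simp [hu_def]
      rw [hf_def]
      simp only [h1]
      rw [Matrix.mulVec_smul, smul_dotProduct, dotProduct_smul]
      simp [smul_eq_mul]; ring
    have hnormsq : ∑ j, v j ^ 2 = ‖u‖ ^ 2 := by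
      rw [EuclideanSpace.norm_eq]
      rw [Real.sq_sqrt (by positivity)]
      apply Finset.sum_congr rfl
      intro j _
      rw [Real.norm_eq_abs, _root_.sq_abs]
      rfl
    have : f v₀ ≤ ‖u‖⁻¹ * ‖u‖⁻¹ * (A.mulVec v ⬝ᵥ v) := by
      rw [← hhom]; exact hle
    have h2 : f v₀ * ‖u‖ ^ 2 ≤ A.mulVec v ⬝ᵥ v := by
      calc f v₀ * ‖u‖ ^ 2 ≤ ‖u‖⁻¹ * ‖u‖⁻¹ * (A.mulVec v ⬝ᵥ v) * ‖u‖ ^ 2 :=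
            mul_le_mul_of_nonneg_right this (sq_nonneg _)
        _ = (‖u‖⁻¹ * ‖u‖) * (‖u‖⁻¹ * ‖u‖) * (A.mulVec v ⬝ᵥ v) := by ring
        _ = A.mulVec v ⬝ᵥ v := by rw [inv_mul_cancel₀ hun]; ring
    rw [hnormsq]
    exact h2

lemma hre_aux (S T : ℂ) :
    ((Real.pi : ℂ) * Complex.I * S + 2 * (Real.pi : ℂ) * Complex.I * T).re
      = -Real.pi * S.im - 2 * Real.pi * T.im := by
  simp [Complex.add_re, Complex.mul_re, Complex.mul_im]
  ring

lemma im_lin (g : ℕ) (v : Fin g → ℝ) (w : Fin g → ℂ) :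
    ((fun j => ((v j : ℝ) : ℂ)) ⬝ᵥ w).im = ∑ j, v j * (w j).im := by
  simp only [dotProduct, Complex.im_sum]
  exact Finset.sum_congr rfl fun j _ => by simp [Complex.mul_im]

lemma im_quad (g : ℕ) (M : Matrix (Fin g) (Fin g) ℂ) (v : Fin g → ℝ) :
    (M.mulVec (fun j => ((v j : ℝ) : ℂ)) ⬝ᵥ (fun j => ((v j : ℝ) : ℂ))).im
      = (Matrix.of fun j k => (M j k).im).mulVec v ⬝ᵥ v := by
  simp only [dotProduct, Matrix.mulVec, Matrix.of_apply, Complex.im_sum]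
  refine Finset.sum_congr rfl fun j _ => ?_
  rw [show ((∑ k, M j k * (v k : ℂ)) * (v j : ℂ)).im = (∑ k, M j k * (v k : ℂ)).im * v j from by
    simp [Complex.mul_im]]
  rw [Complex.im_sum]
  congr 1
  exact Finset.sum_congr rfl fun k _ => by simp [Complex.mul_im]

/-- for `g ≥ 1` and `B` symmetric with positive definite imaginary
part, the theta series is absolutely summable. -/
theorem theta_series_absolutely_summable
    (g : ℕ) (hg : 1 ≤ g) (B : Matrix (Fin g) (Fin g) ℂ)
    (hB : B.IsSymm) (hpos : ImPosDef g B) (p q z : Fin g → ℂ) :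
    Summable (fun m : Fin g → ℤ => ‖thetaTerm g B p q z m‖) := by
  classical
  obtain ⟨c, hc, hcb⟩ := posdefBound g hg (Matrix.of fun j k => (B j k).im) hpos
  set wv : Fin g → ℂ := fun j => B.vecMul p j + B.mulVec p j + 2 * (z j + q j) with hwv
  set W : ℝ := Real.pi * ∑ k, |(wv k).im| with hW
  set C : ℝ := -Real.pi * (B.mulVec p ⬝ᵥ p).im - 2 * Real.pi * ((z + q) ⬝ᵥ p).im with hCdef
  set F : ℤ → ℝ := fun n => Real.exp (-(Real.pi * c) * (n : ℝ) ^ 2 + W * |(n : ℝ)|) with hFdef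
  have hFpos : ∀ n, 0 ≤ F n := fun n => (Real.exp_pos _).le
  have hFsum : Summable F := oneDimAbs c hc W
  have hGsum : Summable (fun m : Fin g → ℤ => Real.exp C * ∏ j, F (m j)) :=
    (piProd g F hFpos hFsum).mul_left _
  refine Summable.of_nonneg_of_le (fun m => norm_nonneg _) (fun m => ?_) hGsum
  set mf : Fin g → ℝ := fun j => ((m j : ℤ) : ℝ) with hmf
  have hmcf : (fun j => ((m j : ℤ) : ℂ)) = fun j => ((mf j : ℝ) : ℂ) := by
    funext j; simp [hmf]
  rw [thetaTerm, Complex.norm_exp, hre_aux, hmcf]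
  -- decompose the quadratic form
  have hSim : (B.mulVec ((fun j => ((mf j : ℝ) : ℂ)) + p) ⬝ᵥ ((fun j => ((mf j : ℝ) : ℂ)) + p)).im
      = (Matrix.of fun j k => (B j k).im).mulVec mf ⬝ᵥ mf
        + (∑ j, mf j * ((B.vecMul p + B.mulVec p) j).im) + (B.mulVec p ⬝ᵥ p).im := by
    rw [Matrix.mulVec_add, add_dotProduct, dotProduct_add, dotProduct_add]
    have e1 : B.mulVec (fun j => ((mf j : ℝ) : ℂ)) ⬝ᵥ p
        = (fun j => ((mf j : ℝ) : ℂ)) ⬝ᵥ B.vecMul p := by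
      rw [dotProduct_comm, dotProduct_mulVec, dotProduct_comm]
    have e2 : B.mulVec p ⬝ᵥ (fun j => ((mf j : ℝ) : ℂ))
        = (fun j => ((mf j : ℝ) : ℂ)) ⬝ᵥ B.mulVec p := dotProduct_comm _ _
    rw [e1, e2]
    simp only [Complex.add_im]
    rw [im_quad, im_lin, im_lin]
    have hsum : (∑ j, mf j * ((B.vecMul p) j).im) + (∑ j, mf j * ((B.mulVec p) j).im)
        = ∑ j, mf j * ((B.vecMul p + B.mulVec p) j).im := by
      rw [← Finset.sum_add_distrib]
      refine Finset.sum_congr rfl fun j _ => ?_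
      simp [Complex.add_im]; ring
    linarith [hsum]
  have hTim : ((z + q) ⬝ᵥ ((fun j => ((mf j : ℝ) : ℂ)) + p)).im
      = (∑ j, mf j * ((z + q) j).im) + ((z + q) ⬝ᵥ p).im := by
    rw [dotProduct_add]
    have e3 : (z + q) ⬝ᵥ (fun j => ((mf j : ℝ) : ℂ))
        = (fun j => ((mf j : ℝ) : ℂ)) ⬝ᵥ (z + q) := dotProduct_comm _ _
    rw [e3, Complex.add_im, im_lin]
  rw [hSim, hTim]
  -- the linear terms combine into the vector `wv`
  have hwim : ∀ j, (wv j).im = ((B.vecMul p + B.mulVec p) j).im + 2 * ((z + q) j).im := by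
    intro j
    simp [hwv, Complex.add_im, Complex.mul_im, Pi.add_apply]
  -- key estimate for the exponent
  have hA1 : -Real.pi * ((Matrix.of fun j k => (B j k).im).mulVec mf ⬝ᵥ mf)
      ≤ ∑ j, (-(Real.pi * c) * mf j ^ 2) := by
    have h1 := hcb mf
    have h2 := mul_le_mul_of_nonneg_left h1 Real.pi_pos.le
    have h3 : ∑ j, (-(Real.pi * c) * mf j ^ 2) = -(Real.pi * (c * ∑ j, mf j ^ 2)) := by
      rw [← Finset.mul_sum]
      ring
    rw [h3]
    linarith
  have hA2 : -Real.pi * (∑ j, mf j * (wv j).im) ≤ ∑ j, W * |mf j| := by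
    rw [Finset.mul_sum]
    refine Finset.sum_le_sum fun j _ => ?_
    have h1 : |(wv j).im| ≤ ∑ k, |(wv k).im| :=
      Finset.single_le_sum (f := fun k => |(wv k).im|) (fun k _ => abs_nonneg _)
        (Finset.mem_univ j)
    have h2 : -Real.pi * (mf j * (wv j).im) ≤ Real.pi * (|mf j| * |(wv j).im|) := by
      nlinarith [Real.pi_pos, neg_abs_le (mf j * (wv j).im), abs_mul (mf j) ((wv j).im),
        abs_nonneg (mf j * (wv j).im)]
    have h3 : Real.pi * (|mf j| * |(wv j).im|) ≤ W * |mf j| := by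
      rw [hW]
      have h4 := mul_le_mul_of_nonneg_left h1
        (mul_nonneg Real.pi_pos.le (abs_nonneg (mf j)))
      nlinarith [h4]
    linarith
  have hkey : -Real.pi * ((Matrix.of fun j k => (B j k).im).mulVec mf ⬝ᵥ mf
        + (∑ j, mf j * ((B.vecMul p + B.mulVec p) j).im) + (B.mulVec p ⬝ᵥ p).im)
      - 2 * Real.pi * ((∑ j, mf j * ((z + q) j).im) + ((z + q) ⬝ᵥ p).im)
      ≤ ∑ j, (-(Real.pi * c) * mf j ^ 2 + W * |mf j|) + C := by
    have hsplit : ∑ j, mf j * (wv j).im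
        = (∑ j, mf j * ((B.vecMul p + B.mulVec p) j).im) + 2 * ∑ j, mf j * ((z + q) j).im := by
      rw [Finset.mul_sum, ← Finset.sum_add_distrib]
      refine Finset.sum_congr rfl fun j _ => ?_
      rw [hwim j]; ring
    have := hA2
    rw [hsplit] at this
    rw [Finset.sum_add_distrib, hCdef]
    linarith [hA1, this]
  calc Real.exp _ ≤ Real.exp (∑ j, (-(Real.pi * c) * mf j ^ 2 + W * |mf j|) + C) :=
        Real.exp_le_exp.mpr hkey
    _ = Real.exp C * ∏ j, F (m j) := by
        rw [Real.exp_add, Real.exp_sum, mul_comm]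
end

section
/- Let g ≥ 1 and let B be a symmetric complex g×g matrix whose imaginary part is positive definite, and let p, q ∈ ℂ^g. Then the function z ↦ Θ[p,q](z|B) is complex differentiable (holomorphic) at every point z ∈ ℂ^g. -/
open scoped BigOperators
open Matrix Complex

/- ### Auxiliary lemmas -/

section Aux

open Finset

lemma theta_coercive (g : ℕ) (hg : 1 ≤ g) (A : Matrix (Fin g) (Fin g) ℝ)
    (hpos : ∀ v : Fin g → ℝ, v ≠ 0 → 0 < A.mulVec v ⬝ᵥ v) :
    ∃ c > 0, ∀ v : Fin g → ℝ, c * ‖v‖ ^ 2 ≤ A.mulVec v ⬝ᵥ v := by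
  haveI : Nonempty (Fin g) := ⟨⟨0, hg⟩⟩
  have hQ : Continuous fun v : Fin g → ℝ => A.mulVec v ⬝ᵥ v := by
    simp only [Matrix.mulVec, dotProduct]
    fun_prop
  have hne : (Metric.sphere (0 : Fin g → ℝ) 1).Nonempty := by
    refine ⟨fun _ => 1, ?_⟩
    simp [Pi.norm_def, Finset.sup_const (Finset.univ_nonempty)]
  obtain ⟨v₀, hv₀, hmin⟩ :=
    (isCompact_sphere (0 : Fin g → ℝ) 1).exists_isMinOn hne hQ.continuousOn
  have hv₀norm : ‖v₀‖ = 1 := by simpa using hv₀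
  have hv₀ne : v₀ ≠ 0 := by intro h; simp [h] at hv₀norm
  refine ⟨A.mulVec v₀ ⬝ᵥ v₀, hpos v₀ hv₀ne, fun v => ?_⟩
  rcases eq_or_ne v 0 with rfl | hv
  · simp
  · have ht : 0 < ‖v‖ := norm_pos_iff.2 hv
    set u : Fin g → ℝ := ‖v‖⁻¹ • v with hu
    have humem : u ∈ Metric.sphere (0 : Fin g → ℝ) 1 := by
      simp [hu, norm_smul, abs_of_pos (inv_pos.2 ht), inv_mul_cancel₀ ht.ne']
    have h1 : A.mulVec v₀ ⬝ᵥ v₀ ≤ A.mulVec u ⬝ᵥ u := hmin humem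
    have hscale : A.mulVec u ⬝ᵥ u = ‖v‖⁻¹ ^ 2 * (A.mulVec v ⬝ᵥ v) := by
      rw [hu, Matrix.mulVec_smul, smul_dotProduct, dotProduct_smul]
      simp [smul_smul]; ring
    rw [hscale] at h1
    have h2 := mul_le_mul_of_nonneg_left h1 (sq_nonneg ‖v‖)
    calc A.mulVec v₀ ⬝ᵥ v₀ * ‖v‖ ^ 2 ≤ ‖v‖ ^ 2 * (‖v‖⁻¹ ^ 2 * (A.mulVec v ⬝ᵥ v)) := by
          linarith [h2]
      _ = A.mulVec v ⬝ᵥ v := by field_simp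

lemma theta_summable_pi_prod {f : ℤ → ℝ} (hf : Summable f) (h0 : ∀ x, 0 ≤ f x) :
    ∀ g : ℕ, Summable fun m : Fin g → ℤ => ∏ j, f (m j) := by
  intro g
  induction g with
  | zero => exact Summable.of_finite
  | succ n ih =>
    have h0f : 0 ≤ f := Pi.le_def.mpr (by simpa using h0)
    have h0P : (0 : (Fin n → ℤ) → ℝ) ≤ fun m : Fin n → ℤ => ∏ j, f (m j) :=
      Pi.le_def.mpr (by intro m; simpa using Finset.prod_nonneg fun j _ => h0 (m j))
    have hprod : Summable fun x : ℤ × (Fin n → ℤ) => f x.1 * ∏ j, f (x.2 j) :=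
      Summable.mul_of_nonneg (g := fun m : Fin n → ℤ => ∏ j, f (m j)) hf ih h0f h0P
    refine (Fin.consEquiv (fun _ : Fin (n + 1) => ℤ)).summable_iff.mp ?_
    convert hprod using 1
    funext x
    simp [Fin.consEquiv, Fin.prod_univ_succ]

lemma theta_summable_exp_neg_abs_int : Summable fun n : ℤ => Real.exp (-|(n : ℝ)|) := by
  apply Summable.of_nat_of_neg
  · simpa using Real.summable_exp_neg_nat
  · simpa using Real.summable_exp_neg_nat

lemma theta_im_quad {g : ℕ} (B : Matrix (Fin g) (Fin g) ℂ) (M : Fin g → ℝ) :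
    (B.mulVec (fun j => (M j : ℂ)) ⬝ᵥ (fun j => (M j : ℂ))).im
      = (Matrix.of fun j k => (B j k).im).mulVec M ⬝ᵥ M := by
  simp only [dotProduct, Matrix.mulVec, Complex.im_sum, Matrix.of_apply]
  refine Finset.sum_congr rfl fun j _ => ?_
  rw [Complex.mul_im]
  simp only [Complex.ofReal_re, Complex.ofReal_im, mul_zero, add_zero, Complex.im_sum,
    Finset.sum_mul]
  rw [zero_add]
  refine Finset.sum_congr rfl fun k _ => ?_
  rw [Complex.mul_im]
  simp

lemma theta_re_pi_I_mul (r : ℝ) (s : ℂ) : ((r : ℂ) * Complex.I * s).re = -(r * s.im) := by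
  simp [Complex.mul_re, Complex.mul_im]

lemma theta_re_two_pi_I_mul (r : ℝ) (s : ℂ) :
    (2 * (r : ℂ) * Complex.I * s).re = -(2 * r * s.im) := by
  simp [Complex.mul_re, Complex.mul_im]

lemma theta_abs_dot_le {g : ℕ} (a b : Fin g → ℂ) :
    ‖a ⬝ᵥ b‖ ≤ ∑ j, ‖a j‖ * ‖b j‖ := by
  refine (norm_sum_le _ _).trans ?_
  exact Finset.sum_le_sum fun j _ => by rw [norm_mul]

lemma theta_quadratic_ineq {a : ℝ} (ha : 0 < a) (b t : ℝ) :
    -a * t ^ 2 + b * t ≤ b ^ 2 / (4 * a) := by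
  rw [le_div_iff₀ (by positivity)]
  nlinarith [sq_nonneg (2 * a * t - b)]

end Aux

set_option maxHeartbeats 2000000 in
/-- `z ↦ Θ[p,q](z|B)` is holomorphic at every `z ∈ ℂ^g`. -/
theorem theta_holomorphic
    (g : ℕ) (hg : 1 ≤ g) (B : Matrix (Fin g) (Fin g) ℂ)
    (hB : B.IsSymm) (hpos : ImPosDef g B) (p q : Fin g → ℂ) :
    ∀ z : Fin g → ℂ, DifferentiableAt ℂ (fun w => Theta g B p q w) z := by
  intro z₀
  classical
  obtain ⟨c, hc, hcoer⟩ := theta_coercive g hg (Matrix.of fun j k => (B j k).im) hpos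
  -- constants
  set KB : ℝ := ∑ j, ∑ k, ‖B j k‖ with hKBdef
  set Kp : ℝ := ∑ j, ‖p j‖ with hKpdef
  set Kz : ℝ := ∑ j, (1 + ‖z₀ j + q j‖) with hKzdef
  have hKB0 : 0 ≤ KB := Finset.sum_nonneg fun j _ => Finset.sum_nonneg fun k _ => norm_nonneg _
  have hKp0 : 0 ≤ Kp := Finset.sum_nonneg fun j _ => norm_nonneg _
  have hKz0 : 0 ≤ Kz := Finset.sum_nonneg fun j _ => by positivity
  set π : ℝ := Real.pi with hπdef
  have hπ0 : 0 < π := Real.pi_pos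
  set a : ℝ := π * c with hadef
  have ha : 0 < a := by positivity
  set b : ℝ := 2 * π * KB * Kp + 2 * π * Kz with hbdef
  set d : ℝ := π * KB * Kp ^ 2 + 2 * π * Kz * Kp with hddef
  set Cfull : ℝ := (1 + g + Kp) * Real.exp (d + (b + 1 + g) ^ 2 / (4 * a)) with hCdef
  have hC0 : 0 ≤ Cfull := by positivity
  -- notation for the lattice vectors
  have key : ∀ m : Fin g → ℤ, ∀ w ∈ Metric.ball z₀ 1,
      ‖thetaTerm g B p q w m‖ ≤
        Real.exp (-a * ‖(fun j => (m j : ℝ))‖ ^ 2 + b * ‖(fun j => (m j : ℝ))‖ + d) := by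
    intro m w hw
    set M : Fin g → ℝ := fun j => (m j : ℝ) with hMdef
    set t : ℝ := ‖M‖ with htdef
    have ht0 : 0 ≤ t := norm_nonneg _
    set Mc : Fin g → ℂ := fun j => ((m j : ℤ) : ℂ) with hMcdef
    have hMc : ∀ k, ‖Mc k‖ ≤ t := by
      intro k
      have : Mc k = ((M k : ℝ) : ℂ) := by simp [hMcdef, hMdef]
      rw [this, Complex.norm_real]
      exact norm_le_pi_norm M k
    have hpk : ∀ k, ‖p k‖ ≤ Kp :=
      fun k => Finset.single_le_sum (f := fun k => ‖p k‖)
        (fun i _ => norm_nonneg _) (Finset.mem_univ k)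
    have hrowB : ∀ j, (∑ k, ‖B j k‖) ≤ KB :=
      fun j => Finset.single_le_sum (f := fun j => ∑ k, ‖B j k‖)
        (fun i _ => Finset.sum_nonneg fun k _ => norm_nonneg _) (Finset.mem_univ j)
    have hrow : ∀ (v : Fin g → ℂ) j, ‖(B.mulVec v) j‖ ≤ ∑ k, ‖B j k‖ * ‖v k‖ :=
      fun v j => theta_abs_dot_le _ _
    -- bounds on the three cross terms of the quadratic part
    have hQmp : ‖B.mulVec Mc ⬝ᵥ p‖ ≤ KB * Kp * t := by
      calc ‖B.mulVec Mc ⬝ᵥ p‖ ≤ ∑ j, ‖(B.mulVec Mc) j‖ * ‖p j‖ := theta_abs_dot_le _ _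
        _ ≤ ∑ j, (KB * t) * ‖p j‖ := by
            refine Finset.sum_le_sum fun j _ => ?_
            refine mul_le_mul_of_nonneg_right ?_ (norm_nonneg _)
            calc ‖(B.mulVec Mc) j‖ ≤ ∑ k, ‖B j k‖ * ‖Mc k‖ := hrow Mc j
              _ ≤ ∑ k, ‖B j k‖ * t := Finset.sum_le_sum fun k _ =>
                  mul_le_mul_of_nonneg_left (hMc k) (norm_nonneg _)
              _ = (∑ k, ‖B j k‖) * t := by rw [Finset.sum_mul]
              _ ≤ KB * t := mul_le_mul_of_nonneg_right (hrowB j) ht0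
        _ = KB * t * Kp := by rw [← Finset.mul_sum]
        _ = KB * Kp * t := by ring
    have hQpm : ‖B.mulVec p ⬝ᵥ Mc‖ ≤ KB * Kp * t := by
      calc ‖B.mulVec p ⬝ᵥ Mc‖ ≤ ∑ j, ‖(B.mulVec p) j‖ * ‖Mc j‖ := theta_abs_dot_le _ _
        _ ≤ ∑ j, ((∑ k, ‖B j k‖) * Kp) * t := by
            refine Finset.sum_le_sum fun j _ => ?_
            refine mul_le_mul ?_ (hMc j) (norm_nonneg _) (by positivity)
            calc ‖(B.mulVec p) j‖ ≤ ∑ k, ‖B j k‖ * ‖p k‖ := hrow p j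
              _ ≤ ∑ k, ‖B j k‖ * Kp := Finset.sum_le_sum fun k _ =>
                  mul_le_mul_of_nonneg_left (hpk k) (norm_nonneg _)
              _ = (∑ k, ‖B j k‖) * Kp := by rw [Finset.sum_mul]
        _ = (∑ j, (∑ k, ‖B j k‖)) * Kp * t := by rw [← Finset.sum_mul, ← Finset.sum_mul]
        _ = KB * Kp * t := by rw [← hKBdef]
    have hQpp : ‖B.mulVec p ⬝ᵥ p‖ ≤ KB * Kp ^ 2 := by
      calc ‖B.mulVec p ⬝ᵥ p‖ ≤ ∑ j, ‖(B.mulVec p) j‖ * ‖p j‖ := theta_abs_dot_le _ _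
        _ ≤ ∑ j, ((∑ k, ‖B j k‖) * Kp) * ‖p j‖ := by
            refine Finset.sum_le_sum fun j _ => ?_
            refine mul_le_mul_of_nonneg_right ?_ (norm_nonneg _)
            calc ‖(B.mulVec p) j‖ ≤ ∑ k, ‖B j k‖ * ‖p k‖ := hrow p j
              _ ≤ ∑ k, ‖B j k‖ * Kp := Finset.sum_le_sum fun k _ =>
                  mul_le_mul_of_nonneg_left (hpk k) (norm_nonneg _)
              _ = (∑ k, ‖B j k‖) * Kp := by rw [Finset.sum_mul]
        _ ≤ ∑ j, ((∑ k, ‖B j k‖) * Kp) * Kp := by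
            refine Finset.sum_le_sum fun j _ => ?_
            refine mul_le_mul_of_nonneg_left (hpk j) (by positivity)
        _ = (∑ j, (∑ k, ‖B j k‖)) * Kp * Kp := by
            rw [← Finset.sum_mul, ← Finset.sum_mul]
        _ = KB * Kp ^ 2 := by rw [← hKBdef]; ring
    -- decompose S
    set nm : Fin g → ℂ := (fun j => ((m j : ℤ) : ℂ)) + p with hnmdef
    set S : ℂ := B.mulVec nm ⬝ᵥ nm with hSdef
    have hSdecomp : S = (B.mulVec Mc ⬝ᵥ Mc) + (B.mulVec Mc ⬝ᵥ p)
        + (B.mulVec p ⬝ᵥ Mc) + (B.mulVec p ⬝ᵥ p) := by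
      have hnm : nm = Mc + p := rfl
      rw [hSdef, hnm, Matrix.mulVec_add, add_dotProduct, dotProduct_add,
        dotProduct_add]
      ring
    have hQmm : c * t ^ 2 ≤ (B.mulVec Mc ⬝ᵥ Mc).im := by
      have := hcoer M
      rwa [← theta_im_quad B M] at this
    have hSim : c * t ^ 2 - (KB * Kp * t + KB * Kp * t + KB * Kp ^ 2) ≤ S.im := by
      rw [hSdecomp]
      simp only [Complex.add_im]
      have h1 : -(KB * Kp * t) ≤ (B.mulVec Mc ⬝ᵥ p).im := by
        have := (Complex.abs_im_le_norm (B.mulVec Mc ⬝ᵥ p))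
        have h2 := neg_abs_le (B.mulVec Mc ⬝ᵥ p).im
        linarith [hQmp]
      have h2 : -(KB * Kp * t) ≤ (B.mulVec p ⬝ᵥ Mc).im := by
        have := (Complex.abs_im_le_norm (B.mulVec p ⬝ᵥ Mc))
        have h2 := neg_abs_le (B.mulVec p ⬝ᵥ Mc).im
        linarith [hQpm]
      have h3 : -(KB * Kp ^ 2) ≤ (B.mulVec p ⬝ᵥ p).im := by
        have := (Complex.abs_im_le_norm (B.mulVec p ⬝ᵥ p))
        have h2 := neg_abs_le (B.mulVec p ⬝ᵥ p).im
        linarith [hQpp]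
      linarith [hQmm]
    -- bound on the linear part
    set T : ℂ := (w + q) ⬝ᵥ nm with hTdef
    have hT : ‖T‖ ≤ Kz * (t + Kp) := by
      calc ‖T‖ ≤ ∑ j, ‖(w + q) j‖ * ‖nm j‖ := theta_abs_dot_le _ _
        _ ≤ ∑ j, (1 + ‖z₀ j + q j‖) * (t + Kp) := by
            refine Finset.sum_le_sum fun j _ => ?_
            refine mul_le_mul ?_ ?_ (norm_nonneg _) (by positivity)
            · have h1 : (w + q) j = (w j - z₀ j) + (z₀ j + q j) := by
                simp [Pi.add_apply]; ring
              rw [h1]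
              refine (norm_add_le _ _).trans ?_
              have h2 : ‖w j - z₀ j‖ ≤ ‖w - z₀‖ := by
                have := norm_le_pi_norm (w - z₀) j
                simpa using this
              have h3 : ‖w - z₀‖ < 1 := by
                rw [← dist_eq_norm]
                exact Metric.mem_ball.mp hw
              linarith
            · have : nm j = Mc j + p j := rfl
              rw [this]
              refine (norm_add_le _ _).trans ?_
              exact add_le_add (hMc j) (hpk j)
        _ = Kz * (t + Kp) := by rw [← Finset.sum_mul]
    have hTim : -(Kz * (t + Kp)) ≤ T.im ∧ T.im ≤ Kz * (t + Kp) := by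
      have h1 := Complex.abs_im_le_norm T
      constructor <;> [linarith [neg_abs_le T.im]; linarith [le_abs_self T.im]]
    -- put everything together
    have hterm : thetaTerm g B p q w m
        = Complex.exp ((π : ℂ) * Complex.I * S + 2 * (π : ℂ) * Complex.I * T) := rfl
    rw [hterm, Complex.norm_exp]
    apply Real.exp_le_exp.mpr
    rw [Complex.add_re, theta_re_pi_I_mul, theta_re_two_pi_I_mul]
    have hπS : π * (c * t ^ 2 - (KB * Kp * t + KB * Kp * t + KB * Kp ^ 2)) ≤ π * S.im :=
      mul_le_mul_of_nonneg_left hSim hπ0.le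
    have hπT : 2 * π * T.im ≥ 2 * π * (-(Kz * (t + Kp))) :=
      mul_le_mul_of_nonneg_left hTim.1 (by positivity)
    rw [hadef, hbdef, hddef]
    linarith [hπS, hπT]
  -- the absorption estimate
  have absorb : ∀ m : Fin g → ℤ,
      (1 + ∑ j, ‖((m j : ℤ) : ℂ) + p j‖) *
        Real.exp (-a * ‖(fun j => (m j : ℝ))‖ ^ 2 + b * ‖(fun j => (m j : ℝ))‖ + d)
      ≤ Cfull * ∏ j, Real.exp (-|(m j : ℝ)|) := by
    intro m
    set M : Fin g → ℝ := fun j => (m j : ℝ) with hMdef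
    set t : ℝ := ‖M‖ with htdef
    have ht0 : 0 ≤ t := norm_nonneg _
    have hfac : (1 + ∑ j, ‖((m j : ℤ) : ℂ) + p j‖) ≤ (1 + g + Kp) * Real.exp t := by
      have h1 : ∑ j, ‖((m j : ℤ) : ℂ) + p j‖ ≤ (g : ℝ) * t + Kp := by
        calc ∑ j, ‖((m j : ℤ) : ℂ) + p j‖ ≤ ∑ j, (t + ‖p j‖) := by
              refine Finset.sum_le_sum fun j _ => ?_
              refine (norm_add_le _ _).trans (add_le_add ?_ le_rfl)
              have : ((m j : ℤ) : ℂ) = ((M j : ℝ) : ℂ) := by simp [hMdef]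
              rw [this, Complex.norm_real]
              exact norm_le_pi_norm M j
          _ = (g : ℝ) * t + Kp := by
              rw [Finset.sum_add_distrib]
              simp [hKpdef, Finset.sum_const, mul_comm]
      have h2 : 1 + (g : ℝ) * t + Kp ≤ (1 + g + Kp) * (1 + t) := by
        have hg0 : (0 : ℝ) ≤ g := Nat.cast_nonneg g
        nlinarith
      have h3 : (1 : ℝ) + t ≤ Real.exp t := by linarith [Real.add_one_le_exp t]
      calc (1 + ∑ j, ‖((m j : ℤ) : ℂ) + p j‖) ≤ 1 + ((g : ℝ) * t + Kp) := by linarith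
        _ ≤ (1 + g + Kp) * (1 + t) := by linarith
        _ ≤ (1 + g + Kp) * Real.exp t := by
            refine mul_le_mul_of_nonneg_left h3 (by positivity)
    have hsum_abs : ∑ j, |M j| ≤ (g : ℝ) * t := by
      calc ∑ j, |M j| ≤ ∑ j, t := Finset.sum_le_sum fun j _ => by
            have := norm_le_pi_norm M j; simpa using this
        _ = (g : ℝ) * t := by simp [Finset.sum_const, mul_comm]
    have hexp : Real.exp (-a * t ^ 2 + b * t + d) * Real.exp t
        ≤ Real.exp (d + (b + 1 + g) ^ 2 / (4 * a)) * Real.exp (-(∑ j, |M j|)) := by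
      rw [← Real.exp_add, ← Real.exp_add]
      apply Real.exp_le_exp.mpr
      have hquad := theta_quadratic_ineq ha (b + 1 + g) t
      linarith [hsum_abs, hquad]
    have hprod : (∏ j, Real.exp (-|(m j : ℝ)|)) = Real.exp (-(∑ j, |M j|)) := by
      rw [← Real.exp_sum]
      congr 1
      rw [← Finset.sum_neg_distrib]
    calc (1 + ∑ j, ‖((m j : ℤ) : ℂ) + p j‖) * Real.exp (-a * t ^ 2 + b * t + d)
        ≤ ((1 + g + Kp) * Real.exp t) * Real.exp (-a * t ^ 2 + b * t + d) := by
          refine mul_le_mul_of_nonneg_right hfac (Real.exp_pos _).le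
      _ = (1 + g + Kp) * (Real.exp (-a * t ^ 2 + b * t + d) * Real.exp t) := by ring
      _ ≤ (1 + g + Kp) * (Real.exp (d + (b + 1 + g) ^ 2 / (4 * a))
            * Real.exp (-(∑ j, |M j|))) := by
          refine mul_le_mul_of_nonneg_left hexp (by positivity)
      _ = Cfull * ∏ j, Real.exp (-|(m j : ℝ)|) := by rw [hCdef, hprod]; ring
  -- master bound
  have master : ∀ m : Fin g → ℤ, ∀ w ∈ Metric.ball z₀ 1,
      (1 + ∑ j, ‖((m j : ℤ) : ℂ) + p j‖) * ‖thetaTerm g B p q w m‖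
        ≤ Cfull * ∏ j, Real.exp (-|(m j : ℝ)|) := by
    intro m w hw
    refine le_trans ?_ (absorb m)
    refine mul_le_mul_of_nonneg_left (key m w hw) ?_
    positivity
  have hone_le : ∀ m : Fin g → ℤ, (1 : ℝ) ≤ 1 + ∑ j, ‖((m j : ℤ) : ℂ) + p j‖ := by
    intro m
    have : (0:ℝ) ≤ ∑ j, ‖((m j : ℤ) : ℂ) + p j‖ :=
      Finset.sum_nonneg fun j _ => norm_nonneg _
    linarith
  -- the derivative candidates
  set L : (Fin g → ℤ) → ((Fin g → ℂ) →L[ℂ] ℂ) := fun m =>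
    ∑ j, (((m j : ℤ) : ℂ) + p j) • ContinuousLinearMap.proj j with hLdef
  have hLapp : ∀ m w, L m w = w ⬝ᵥ ((fun j => ((m j : ℤ) : ℂ)) + p) := by
    intro m w
    rw [hLdef]
    simp only [ContinuousLinearMap.coe_sum', Finset.sum_apply,
      ContinuousLinearMap.coe_smul', Pi.smul_apply, ContinuousLinearMap.proj_apply,
      smul_eq_mul, dotProduct, Pi.add_apply]
    exact Finset.sum_congr rfl fun j _ => by ring
  have hLnorm : ∀ m, ‖L m‖ ≤ ∑ j, ‖((m j : ℤ) : ℂ) + p j‖ := by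
    intro m
    refine ContinuousLinearMap.opNorm_le_bound _
      (Finset.sum_nonneg fun j _ => norm_nonneg _) fun w => ?_
    rw [hLapp]
    refine (theta_abs_dot_le _ _).trans ?_
    rw [Finset.sum_mul]
    refine Finset.sum_le_sum fun j _ => ?_
    rw [mul_comm ‖((m j : ℤ) : ℂ) + p j‖]
    refine mul_le_mul_of_nonneg_right ?_ (norm_nonneg _)
    exact norm_le_pi_norm w j
  set f' : (Fin g → ℤ) → (Fin g → ℂ) → ((Fin g → ℂ) →L[ℂ] ℂ) := fun m w =>
    thetaTerm g B p q w m • ((2 * (Real.pi : ℂ) * Complex.I) • L m) with hf'def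
  have hf : ∀ m : Fin g → ℤ, ∀ w : Fin g → ℂ,
      HasFDerivAt (fun w => thetaTerm g B p q w m) (f' m w) w := by
    intro m w
    set nm : Fin g → ℂ := (fun j => ((m j : ℤ) : ℂ)) + p with hnmdef
    set a₀ : ℂ := (Real.pi : ℂ) * Complex.I * (B.mulVec nm ⬝ᵥ nm)
      + 2 * (Real.pi : ℂ) * Complex.I * (q ⬝ᵥ nm) with ha₀def
    have heq : (fun w => thetaTerm g B p q w m)
        = fun w => Complex.exp (a₀ + 2 * (Real.pi : ℂ) * Complex.I * (L m w)) := by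
      funext v
      rw [hLapp]
      show Complex.exp _ = _
      congr 1
      rw [ha₀def]
      rw [show (v + q) ⬝ᵥ nm = v ⬝ᵥ nm + q ⬝ᵥ nm from add_dotProduct v q nm]
      ring
    have hd : HasFDerivAt (fun w => a₀ + 2 * (Real.pi : ℂ) * Complex.I * (L m w))
        ((2 * (Real.pi : ℂ) * Complex.I) • L m) w :=
      (((L m).hasFDerivAt).const_mul (2 * (Real.pi : ℂ) * Complex.I)).const_add a₀
    have hptw : thetaTerm g B p q w m
        = Complex.exp (a₀ + 2 * (Real.pi : ℂ) * Complex.I * (L m w)) := congrFun heq w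
    have goal' : HasFDerivAt (fun w => thetaTerm g B p q w m)
        (thetaTerm g B p q w m • ((2 * (Real.pi : ℂ) * Complex.I) • L m)) w := by
      rw [hptw, heq]
      exact hd.cexp
    exact goal'
  have hf'norm : ∀ m : Fin g → ℤ, ∀ w : Fin g → ℂ,
      ‖f' m w‖ ≤ (2 * Real.pi) * ((1 + ∑ j, ‖((m j : ℤ) : ℂ) + p j‖)
        * ‖thetaTerm g B p q w m‖) := by
    intro m w
    have hfx : f' m w = thetaTerm g B p q w m • ((2 * (Real.pi : ℂ) * Complex.I) • L m) :=
      rfl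
    rw [hfx, norm_smul (thetaTerm g B p q w m) ((2 * (Real.pi : ℂ) * Complex.I) • L m),
      norm_smul (2 * (Real.pi : ℂ) * Complex.I) (L m)]
    have h2pi : ‖(2 * (Real.pi : ℂ) * Complex.I)‖ = 2 * Real.pi := by
      simp [norm_mul, Complex.norm_real, abs_of_pos Real.pi_pos]
    rw [h2pi]
    calc ‖thetaTerm g B p q w m‖ * (2 * Real.pi * ‖L m‖)
        ≤ ‖thetaTerm g B p q w m‖ * (2 * Real.pi * (1 + ∑ j, ‖((m j : ℤ) : ℂ) + p j‖)) := by
          refine mul_le_mul_of_nonneg_left ?_ (norm_nonneg _)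
          refine mul_le_mul_of_nonneg_left ?_ (by positivity)
          exact (hLnorm m).trans (by linarith [hone_le m])
      _ = (2 * Real.pi) * ((1 + ∑ j, ‖((m j : ℤ) : ℂ) + p j‖)
            * ‖thetaTerm g B p q w m‖) := by ring
  -- summable majorant
  set u : (Fin g → ℤ) → ℝ := fun m =>
    (2 * Real.pi) * (Cfull * ∏ j, Real.exp (-|(m j : ℝ)|)) with hudef
  have husum : Summable u := by
    refine Summable.mul_left _ ?_
    refine Summable.mul_left _ ?_
    exact theta_summable_pi_prod theta_summable_exp_neg_abs_int
      (fun x => (Real.exp_pos _).le) g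
  -- summability at the center
  have hf0 : Summable fun m : Fin g → ℤ => thetaTerm g B p q z₀ m := by
    refine Summable.of_norm_bounded (g := fun m : Fin g → ℤ => Cfull * ∏ j, Real.exp (-|(m j : ℝ)|)) ?_ ?_
    · refine Summable.mul_left _ ?_
      exact theta_summable_pi_prod theta_summable_exp_neg_abs_int
        (fun x => (Real.exp_pos _).le) g
    · intro m
      have h1 := master m z₀ (Metric.mem_ball_self one_pos)
      have h2 := hone_le m
      have h3 := mul_le_mul_of_nonneg_right h2 (norm_nonneg (thetaTerm g B p q z₀ m))
      rw [one_mul] at h3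
      exact h3.trans h1
  -- apply the series differentiation theorem
  have hbound : ∀ (m : Fin g → ℤ), ∀ w ∈ Metric.ball z₀ 1, ‖f' m w‖ ≤ u m := by
    intro m w hw
    refine (hf'norm m w).trans ?_
    rw [hudef]
    exact mul_le_mul_of_nonneg_left (master m w hw) (by positivity)
  have hderiv := hasFDerivAt_tsum_of_isPreconnected husum Metric.isOpen_ball
    (convex_ball z₀ (1:ℝ)).isPreconnected
    (fun m w _ => hf m w) hbound (Metric.mem_ball_self one_pos) hf0
    (Metric.mem_ball_self one_pos)
  have : DifferentiableAt ℂ (fun w => ∑' m : Fin g → ℤ, thetaTerm g B p q w m) z₀ :=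
    hderiv.differentiableAt
  simpa only [Theta] using this
end

section
/- (Vanishing at the origin for odd characteristics.) Let g ≥ 1, let B be a symmetric complex g×g matrix whose imaginary part is positive definite, and let p, q ∈ ℂ^g be half-integer vectors (2p, 2q ∈ ℤ^g) such that the integer 4⟨p,q⟩ = 4∑_{j=1}^g p_j q_j is odd. Then Θ[p,q](0 | B) = 0. -/
open scoped BigOperators
open Matrix Complex

/-- vanishing of `Θ[p,q](0|B)` for odd half-integer
characteristics: if `2p = a`, `2q = b` with `a, b ∈ ℤ^g` and `∑ a_j b_j`
(which equals `4⟨p,q⟩`) is odd, then `Θ[p,q](0 | B) = 0`. -/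
theorem theta_vanishes_at_origin_odd_characteristic
    (g : ℕ) (hg : 1 ≤ g) (B : Matrix (Fin g) (Fin g) ℂ)
    (hB : B.IsSymm) (hpos : ImPosDef g B) (p q : Fin g → ℂ)
    (a b : Fin g → ℤ)
    (hp : ∀ j, 2 * p j = (a j : ℂ)) (hq : ∀ j, 2 * q j = (b j : ℂ))
    (hodd : Odd (∑ j, a j * b j)) :
    Theta g B p q 0 = 0 := by
  -- the involution `m ↦ -a - m` negates each term of the series
  have key : ∀ m : Fin g → ℤ,
      thetaTerm g B p q 0 (-a - m) = - thetaTerm g B p q 0 m := by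
    intro m
    set v : Fin g → ℂ := (fun j => ((m j : ℤ) : ℂ)) + p with hvdef
    have hv : (fun j => (((-a - m) j : ℤ) : ℂ)) + p = -v := by
      funext j
      have h := hp j
      simp only [hvdef, Pi.add_apply, Pi.sub_apply, Pi.neg_apply]
      push_cast
      linear_combination h
    unfold thetaTerm
    rw [hv]
    rw [Matrix.mulVec_neg, neg_dotProduct, dotProduct_neg, neg_neg,
      dotProduct_neg]
    set A : ℂ := (Real.pi : ℂ) * Complex.I * (B.mulVec v ⬝ᵥ v) with hA
    set L : ℂ := 2 * (Real.pi : ℂ) * Complex.I * (((0 : Fin g → ℂ) + q) ⬝ᵥ v) with hL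
    have hsplit : A + -L = (A + L) + (-2 * L) := by ring
    rw [mul_neg, ← hL, hsplit, Complex.exp_add]
    set K : ℤ := ∑ j, b j * (2 * m j + a j) with hKdef
    have h4 : (4 : ℂ) * (((0 : Fin g → ℂ) + q) ⬝ᵥ v) = ((K : ℤ) : ℂ) := by
      have hdp : ((0 : Fin g → ℂ) + q) ⬝ᵥ v = ∑ j, q j * ((m j : ℂ) + p j) := by
        simp [dotProduct, hvdef]
      rw [hdp, Finset.mul_sum, hKdef]
      push_cast
      apply Finset.sum_congr rfl
      intro j _
      linear_combination ((2 : ℂ) * (m j : ℂ) + (a j : ℂ)) * hq j + 2 * q j * hp j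
    have hK : -2 * L = -((Real.pi : ℂ) * Complex.I) * ((K : ℤ) : ℂ) := by
      rw [hL, ← h4]; ring
    have hKodd : Odd K := by
      have hsplit2 : K = 2 * (∑ j, b j * m j) + ∑ j, a j * b j := by
        rw [hKdef, Finset.mul_sum, ← Finset.sum_add_distrib]
        exact Finset.sum_congr rfl (fun j _ => by ring)
      rw [hsplit2]
      exact Even.add_odd (even_two_mul _) hodd
    obtain ⟨l, hl⟩ := hKodd
    have hexp : Complex.exp (-2 * L) = -1 := by
      rw [hK, hl]
      push_cast
      have hre : -((Real.pi : ℂ) * Complex.I) * (2 * (l : ℂ) + 1)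
          = (-l : ℤ) * (2 * (Real.pi : ℂ) * Complex.I) + -((Real.pi : ℂ) * Complex.I) := by
        push_cast; ring
      rw [hre, Complex.exp_add, Complex.exp_int_mul_two_pi_mul_I, one_mul,
        Complex.exp_neg, Complex.exp_pi_mul_I]
      norm_num
    rw [hexp]
    ring
  -- reindex the sum by the involution
  have hσ : Theta g B p q 0 = - Theta g B p q 0 := by
    unfold Theta
    calc ∑' m : Fin g → ℤ, thetaTerm g B p q 0 m
        = ∑' m : Fin g → ℤ, thetaTerm g B p q 0 ((Equiv.subLeft (-a)) m) :=
          (Equiv.tsum_eq _ _).symm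
      _ = ∑' m : Fin g → ℤ, - thetaTerm g B p q 0 m := by
          apply tsum_congr; intro m; simpa [Equiv.subLeft] using key m
      _ = - ∑' m : Fin g → ℤ, thetaTerm g B p q 0 m := tsum_neg
  linear_combination hσ / 2
end
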